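/- Let A be a real V×V matrix that is entrywise nonnegative, symmetric, and irreducible, let I ⊆ {1,…,V} be nonempty, P_m the orthogonal projection onto K_m = span{e_i : i ∈ I}, A_m = P_m A P_m, μ a principal eigenvector of A with eigenvalue λ, and μ̃ ∈ K_m a principal eigenvector of A_m. Set γ = ‖P_m A (𝟙 − P_m)‖₂ and δ = inf{‖(A_m − λ𝟙)z‖₂ : z ∈ K_m, z ⊥ μ̃, ‖z‖₂ = 1}. Assume P_m μ ≠ 0. Then the product-form bound holds: δ · sin∠(P_m μ, μ̃) · cos∠(μ, K_m) ≤ γ · sin∠(μ, K_m), where cos∠(μ, K_m) = ‖P_m μ‖₂/‖μ‖₂ and sin∠(μ, K_m) = ‖(𝟙 − P_m)μ‖₂/‖μ‖₂. -/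

import Mathlib

open Matrix

/-- Euclidean norm of a finitely-indexed real vector. -/
noncomputable def eNorm {n : Type*} [Fintype n] (v : n → ℝ) : ℝ :=
  Real.sqrt (∑ i, v i ^ 2)

/-- Induced 2-norm (largest singular value) of a real matrix. -/
noncomputable def mNorm {m n : Type*} [Fintype m] [Fintype n] (A : Matrix m n ℝ) : ℝ :=
  sSup {y : ℝ | ∃ x : n → ℝ, eNorm x = 1 ∧ y = eNorm (A.mulVec x)}

/-- Sine of the angle between two vectors. -/
noncomputable def sinAngle {n : Type*} [Fintype n] (u v : n → ℝ) : ℝ :=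
  Real.sqrt (1 - ((∑ i, u i * v i) / (eNorm u * eNorm v)) ^ 2)

/-- The orthogonal projection matrix onto the coordinate subspace
`K_m = span{e_i : i ∈ I}`. -/
noncomputable def coordProj {V : ℕ} (I : Finset (Fin V)) : Matrix (Fin V) (Fin V) ℝ :=
  Matrix.diagonal fun i => if i ∈ I then 1 else 0

/-- A nonnegative matrix is irreducible if for every pair of indices some positive
power of the matrix has a positive entry there. -/
def MatrixIrreducible {V : ℕ} (A : Matrix (Fin V) (Fin V) ℝ) : Prop :=
  ∀ i j : Fin V, ∃ k : ℕ, 0 < k ∧ 0 < (A ^ k) i j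

section helpers
variable {n : Type*} [Fintype n]

lemma eNorm_nonneg' (v : n → ℝ) : 0 ≤ eNorm v := Real.sqrt_nonneg _

lemma sq_eNorm (v : n → ℝ) : eNorm v ^ 2 = ∑ i, v i ^ 2 :=
  Real.sq_sqrt (by positivity)

lemma eNorm_eq_sqrt_dot (v : n → ℝ) : eNorm v = Real.sqrt (v ⬝ᵥ v) := by
  unfold eNorm dotProduct; congr 1; exact Finset.sum_congr rfl fun i _ => sq (v i)

lemma dot_self_eq (v : n → ℝ) : v ⬝ᵥ v = eNorm v ^ 2 := by
  rw [sq_eNorm]; unfold dotProduct; exact Finset.sum_congr rfl fun i _ => (sq (v i)).symm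

lemma eNorm_pos' {v : n → ℝ} (h : v ≠ 0) : 0 < eNorm v := by
  unfold eNorm
  apply Real.sqrt_pos.mpr
  obtain ⟨i, hi⟩ : ∃ i, v i ≠ 0 := by
    by_contra hc; push_neg at hc; exact h (funext hc)
  exact Finset.sum_pos' (fun j _ => sq_nonneg _) ⟨i, Finset.mem_univ i, by positivity⟩

lemma eNorm_smul' (c : ℝ) (v : n → ℝ) : eNorm (c • v) = |c| * eNorm v := by
  unfold eNorm
  have h : ∑ i, (c • v) i ^ 2 = c ^ 2 * ∑ i, v i ^ 2 := by
    rw [Finset.mul_sum]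
    exact Finset.sum_congr rfl fun i _ => by simp [mul_pow]
  rw [h, Real.sqrt_mul (sq_nonneg c), Real.sqrt_sq_eq_abs]

lemma eNorm_zero' : eNorm (0 : n → ℝ) = 0 := by simp [eNorm]

lemma eNorm_neg' (v : n → ℝ) : eNorm (-v) = eNorm v := by
  unfold eNorm; congr 1; exact Finset.sum_congr rfl fun i _ => by simp

lemma pythag {a b : n → ℝ} (h : a ⬝ᵥ b = 0) : eNorm b ≤ eNorm (a + b) := by
  unfold eNorm
  apply Real.sqrt_le_sqrt
  have hexp : ∑ i, (a + b) i ^ 2 = (∑ i, a i ^ 2) + 2 * (a ⬝ᵥ b) + ∑ i, b i ^ 2 := by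
    unfold dotProduct
    rw [Finset.mul_sum, ← Finset.sum_add_distrib, ← Finset.sum_add_distrib]
    exact Finset.sum_congr rfl fun i _ => by simp [Pi.add_apply]; ring
  rw [hexp, h]
  have : 0 ≤ ∑ i, a i ^ 2 := Finset.sum_nonneg fun i _ => sq_nonneg _
  linarith

lemma eNorm_mulVec_le {m : Type*} [Fintype m] (M : Matrix m n ℝ) (x : n → ℝ) :
    eNorm (M.mulVec x) ≤ Real.sqrt (∑ i, ∑ j, M i j ^ 2) * eNorm x := by
  unfold eNorm
  rw [← Real.sqrt_mul (by positivity)]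
  apply Real.sqrt_le_sqrt
  rw [Finset.sum_mul]
  apply Finset.sum_le_sum
  intro i _
  have h := Finset.sum_mul_sq_le_sq_mul_sq Finset.univ (fun j => M i j) x
  simpa [Matrix.mulVec, dotProduct] using h

lemma exists_eNorm_one [Nonempty n] : ∃ x : n → ℝ, eNorm x = 1 := by
  haveI := Classical.decEq n
  refine ⟨(Pi.single (Classical.arbitrary n) (1:ℝ) : n → ℝ), ?_⟩
  unfold eNorm
  have : ∑ i, (Pi.single (Classical.arbitrary n) (1:ℝ) : n → ℝ) i ^ 2 = 1 := by
    rw [Finset.sum_eq_single (Classical.arbitrary n)]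
    · simp
    · intro b _ hb; simp [Pi.single_apply, hb]
    · simp
  rw [this, Real.sqrt_one]

lemma mNorm_bddAbove {m : Type*} [Fintype m] (M : Matrix m n ℝ) :
    BddAbove {y : ℝ | ∃ x : n → ℝ, eNorm x = 1 ∧ y = eNorm (M.mulVec x)} := by
  refine ⟨Real.sqrt (∑ i, ∑ j, M i j ^ 2), ?_⟩
  rintro y ⟨z, hz, rfl⟩
  have h := eNorm_mulVec_le M z
  rwa [hz, mul_one] at h

lemma mNorm_nonneg' {m : Type*} [Fintype m] [Nonempty n] (M : Matrix m n ℝ) :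
    0 ≤ mNorm M := by
  obtain ⟨x0, hx0⟩ := exists_eNorm_one (n := n)
  exact le_trans (eNorm_nonneg' _) (le_csSup (mNorm_bddAbove M) ⟨x0, hx0, rfl⟩)

lemma mNorm_spec {m : Type*} [Fintype m] [Nonempty n] (M : Matrix m n ℝ) (x : n → ℝ) :
    eNorm (M.mulVec x) ≤ mNorm M * eNorm x := by
  by_cases hx : x = 0
  · subst hx
    rw [show M.mulVec 0 = 0 from by simp, eNorm_zero', eNorm_zero', mul_zero]
  · have hc : 0 < eNorm x := eNorm_pos' hx
    set u := (eNorm x)⁻¹ • x with hu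
    have hu1 : eNorm u = 1 := by
      rw [hu, eNorm_smul', abs_of_pos (inv_pos.mpr hc), inv_mul_cancel₀ hc.ne']
    have hle : eNorm (M.mulVec u) ≤ mNorm M :=
      le_csSup (mNorm_bddAbove M) ⟨u, hu1, rfl⟩
    have hxu : M.mulVec x = eNorm x • M.mulVec u := by
      rw [hu, Matrix.mulVec_smul, smul_smul, mul_inv_cancel₀ hc.ne', one_smul]
    rw [hxu, eNorm_smul', abs_of_pos hc, mul_comm]
    exact mul_le_mul_of_nonneg_right hle hc.le

lemma dot_mulVec_symm {M : Matrix n n ℝ} (hM : Mᵀ = M) (x y : n → ℝ) :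
    x ⬝ᵥ M.mulVec y = M.mulVec x ⬝ᵥ y := by
  rw [Matrix.dotProduct_mulVec, ← Matrix.vecMul_transpose M x, hM]

end helpers

/-- Under the same setting as Statement 0 (but without assuming
`δ > 0`), the product-form bound
`δ · sin∠(P μ, μt) · cos∠(μ, K_m) ≤ γ · sin∠(μ, K_m)` holds, where
`cos∠(μ, K_m) = ‖P μ‖₂ / ‖μ‖₂` and `sin∠(μ, K_m) = ‖(1 - P) μ‖₂ / ‖μ‖₂`. -/
theorem stmt1 {V : ℕ} (A : Matrix (Fin V) (Fin V) ℝ)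
    (hA_nonneg : ∀ i j, 0 ≤ A i j) (hA_symm : A.IsSymm) (hA_irr : MatrixIrreducible A)
    (I : Finset (Fin V)) (hI : I.Nonempty)
    (P : Matrix (Fin V) (Fin V) ℝ) (hP : P = coordProj I)
    (Am : Matrix (Fin V) (Fin V) ℝ) (hAm : Am = P * A * P)
    (μ : Fin V → ℝ) (lam : ℝ) (hμ_ne : μ ≠ 0) (hμ : A.mulVec μ = lam • μ)
    (hlam_max : ∀ (lam' : ℝ) (x : Fin V → ℝ), x ≠ 0 → A.mulVec x = lam' • x → |lam'| ≤ lam)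
    (μt : Fin V → ℝ) (lamt : ℝ) (hμt_ne : μt ≠ 0) (hμt_mem : P.mulVec μt = μt)
    (hμt : Am.mulVec μt = lamt • μt)
    (hlamt_max : ∀ (lam' : ℝ) (x : Fin V → ℝ), x ≠ 0 → Am.mulVec x = lam' • x → |lam'| ≤ lamt)
    (γ δ : ℝ) (hγ : γ = mNorm (P * A * (1 - P)))
    (hδ : δ = sInf {y : ℝ | ∃ z : Fin V → ℝ, P.mulVec z = z ∧ (∑ i, z i * μt i) = 0 ∧
      eNorm z = 1 ∧ y = eNorm ((Am - lam • 1).mulVec z)})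
    (hPμ : P.mulVec μ ≠ 0) :
    δ * sinAngle (P.mulVec μ) μt * (eNorm (P.mulVec μ) / eNorm μ) ≤
      γ * (eNorm ((1 - P).mulVec μ) / eNorm μ) := by
  haveI hV : Nonempty (Fin V) := by
    by_contra hc
    exact hμ_ne (funext fun i => absurd ⟨i⟩ hc)
  have hPP : P * P = P := by
    rw [hP]; unfold coordProj
    rw [Matrix.diagonal_mul_diagonal]
    refine congrArg Matrix.diagonal (funext fun i => ?_)
    by_cases h : i ∈ I <;> simp [h]
  have hPT : Pᵀ = P := by rw [hP]; unfold coordProj; exact Matrix.diagonal_transpose _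
  have hAT : Aᵀ = A := hA_symm
  have hAmT : Amᵀ = Am := by
    rw [hAm, Matrix.transpose_mul, Matrix.transpose_mul, hPT, hAT]
    exact (Matrix.mul_assoc P A P).symm
  have hQQ : (1 - P) * (1 - P) = 1 - P := by
    rw [sub_mul, one_mul, mul_sub, mul_one, hPP]; simp
  set u := P.mulVec μ with hu_def
  set w := (1 - P).mulVec μ with hw_def
  set M0 := P * A * (1 - P) with hM0
  have hPu : P.mulVec u = u := by rw [hu_def, Matrix.mulVec_mulVec, hPP]
  have hAmP : Am * P = Am := by
    rw [hAm, Matrix.mul_assoc (P * A) P P, hPP]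
  have hAmu : Am.mulVec u = Am.mulVec μ := by
    rw [hu_def, Matrix.mulVec_mulVec, hAmP]
  have hM0Q : M0 * (1 - P) = M0 := by
    rw [hM0, Matrix.mul_assoc (P * A) (1 - P) (1 - P), hQQ]
  have hM0w : M0.mulVec w = M0.mulVec μ := by
    rw [hw_def, Matrix.mulVec_mulVec, hM0Q]
  have hPAμ : (P * A).mulVec μ = lam • u := by
    rw [← Matrix.mulVec_mulVec, hμ, Matrix.mulVec_smul, hu_def]
  have key : (Am - lam • (1 : Matrix (Fin V) (Fin V) ℝ)).mulVec u = -(M0.mulVec w) := by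
    rw [Matrix.sub_mulVec, hAmu, Matrix.smul_mulVec, Matrix.one_mulVec, hM0w,
        hM0, mul_sub, mul_one, Matrix.sub_mulVec, hPAμ, hAm]
    abel
  have hct : 0 < eNorm μt := eNorm_pos' hμt_ne
  have hcu : 0 < eNorm u := eNorm_pos' hPμ
  have hcμ : 0 < eNorm μ := eNorm_pos' hμ_ne
  set d := u ⬝ᵥ μt with hd
  set c := d / (eNorm μt) ^ 2 with hc
  set z := u - c • μt with hz
  have hz_orth : z ⬝ᵥ μt = 0 := by
    rw [hz, sub_dotProduct, smul_dotProduct, dot_self_eq, smul_eq_mul, hc]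
    field_simp
    exact sub_eq_zero.mpr hd.symm
  have hPz : P.mulVec z = z := by
    rw [hz, Matrix.mulVec_sub, hPu, Matrix.mulVec_smul, hμt_mem]
  have hsym : (Am - lam • (1 : Matrix (Fin V) (Fin V) ℝ))ᵀ = Am - lam • 1 := by
    rw [Matrix.transpose_sub, hAmT, Matrix.transpose_smul, Matrix.transpose_one]
  have horth2 : ((Am - lam • (1 : Matrix (Fin V) (Fin V) ℝ)).mulVec z) ⬝ᵥ μt = 0 := by
    rw [← dot_mulVec_symm hsym z μt, Matrix.sub_mulVec, hμt, Matrix.smul_mulVec,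
        Matrix.one_mulVec, ← sub_smul, dotProduct_smul, smul_eq_mul, hz_orth, mul_zero]
  have hcμt : (Am - lam • (1 : Matrix (Fin V) (Fin V) ℝ)).mulVec (c • μt)
      = (c * (lamt - lam)) • μt := by
    rw [Matrix.mulVec_smul, Matrix.sub_mulVec, hμt, Matrix.smul_mulVec,
        Matrix.one_mulVec, ← sub_smul, smul_smul]
  have hsplit : (Am - lam • (1 : Matrix (Fin V) (Fin V) ℝ)).mulVec u
      = (c * (lamt - lam)) • μt + (Am - lam • 1).mulVec z := by
    have hu_split : u = c • μt + z := by rw [hz]; abel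
    conv_lhs => rw [hu_split]
    rw [Matrix.mulVec_add, hcμt]
  have hpyth : eNorm ((Am - lam • (1 : Matrix (Fin V) (Fin V) ℝ)).mulVec z)
      ≤ eNorm ((Am - lam • 1).mulVec u) := by
    rw [hsplit]
    apply pythag
    rw [smul_dotProduct, smul_eq_mul, dotProduct_comm, horth2, mul_zero]
  have hCS : d ^ 2 ≤ (eNorm u) ^ 2 * (eNorm μt) ^ 2 := by
    calc d ^ 2 = (∑ i, u i * μt i) ^ 2 := by rw [hd]; rfl
      _ ≤ (∑ i, u i ^ 2) * ∑ i, μt i ^ 2 :=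
          Finset.sum_mul_sq_le_sq_mul_sq Finset.univ u μt
      _ = (eNorm u) ^ 2 * (eNorm μt) ^ 2 := by rw [sq_eNorm, sq_eNorm]
  have hzz : eNorm z ^ 2 = (eNorm u) ^ 2 - d ^ 2 / (eNorm μt) ^ 2 := by
    rw [← dot_self_eq z, hz, sub_dotProduct, dotProduct_sub, dotProduct_sub, dotProduct_smul,
        smul_dotProduct, smul_dotProduct, dotProduct_smul, dot_self_eq u, dot_self_eq μt,
        dotProduct_comm μt u, ← hd, hc]
    simp only [smul_eq_mul]
    field_simp
    ring
  have hsin : sinAngle u μt * eNorm u = eNorm z := by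
    unfold sinAngle
    have hdot : (∑ i, u i * μt i) = d := hd.symm
    have h1 : 0 ≤ 1 - (d / (eNorm u * eNorm μt)) ^ 2 := by
      rw [div_pow, mul_pow]
      have hpos : 0 < (eNorm u) ^ 2 * (eNorm μt) ^ 2 := by positivity
      have h2 : d ^ 2 / ((eNorm u) ^ 2 * (eNorm μt) ^ 2) ≤ 1 := (div_le_one hpos).mpr hCS
      linarith
    have h3 : Real.sqrt (1 - (d / (eNorm u * eNorm μt)) ^ 2) * eNorm u
        = Real.sqrt ((1 - (d / (eNorm u * eNorm μt)) ^ 2) * (eNorm u) ^ 2) := by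
      rw [Real.sqrt_mul h1, Real.sqrt_sq hcu.le]
    have h4 : eNorm z = Real.sqrt (eNorm z ^ 2) := (Real.sqrt_sq (eNorm_nonneg' z)).symm
    rw [hdot, h3, h4, hzz]
    congr 1
    field_simp
  have hmain : δ * eNorm z ≤ γ * eNorm w := by
    by_cases hz0 : z = 0
    · rw [hz0, eNorm_zero', mul_zero]
      exact mul_nonneg (hγ ▸ mNorm_nonneg' _) (eNorm_nonneg' _)
    · have hez : 0 < eNorm z := eNorm_pos' hz0
      set ζ := (eNorm z)⁻¹ • z with hζ
      have hζ1 : eNorm ζ = 1 := by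
        rw [hζ, eNorm_smul', abs_of_pos (inv_pos.mpr hez), inv_mul_cancel₀ hez.ne']
      have hPζ : P.mulVec ζ = ζ := by rw [hζ, Matrix.mulVec_smul, hPz]
      have hζorth : (∑ i, ζ i * μt i) = 0 := by
        show ζ ⬝ᵥ μt = 0
        rw [hζ, smul_dotProduct, hz_orth, smul_zero]
      have hbdd : BddBelow {y : ℝ | ∃ z : Fin V → ℝ, P.mulVec z = z ∧ (∑ i, z i * μt i) = 0 ∧
          eNorm z = 1 ∧ y = eNorm ((Am - lam • 1).mulVec z)} := by
        refine ⟨0, ?_⟩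
        rintro y ⟨z', _, _, _, rfl⟩
        exact eNorm_nonneg' _
      have hδle : δ ≤ eNorm ((Am - lam • (1 : Matrix (Fin V) (Fin V) ℝ)).mulVec ζ) := by
        rw [hδ]
        exact csInf_le hbdd ⟨ζ, hPζ, hζorth, hζ1, rfl⟩
      have hval : eNorm ((Am - lam • (1 : Matrix (Fin V) (Fin V) ℝ)).mulVec ζ)
          = (eNorm z)⁻¹ * eNorm ((Am - lam • 1).mulVec z) := by
        rw [hζ, Matrix.mulVec_smul, eNorm_smul', abs_of_pos (inv_pos.mpr hez)]
      rw [hval] at hδle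
      have h3 : δ * eNorm z ≤ eNorm ((Am - lam • (1 : Matrix (Fin V) (Fin V) ℝ)).mulVec z) := by
        calc δ * eNorm z ≤ ((eNorm z)⁻¹ * eNorm ((Am - lam • 1).mulVec z)) * eNorm z :=
              mul_le_mul_of_nonneg_right hδle hez.le
          _ = eNorm ((Am - lam • 1).mulVec z) := by field_simp
      calc δ * eNorm z ≤ eNorm ((Am - lam • (1 : Matrix (Fin V) (Fin V) ℝ)).mulVec z) := h3
        _ ≤ eNorm ((Am - lam • 1).mulVec u) := hpyth
        _ = eNorm (M0.mulVec w) := by rw [key, eNorm_neg']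
        _ ≤ mNorm M0 * eNorm w := mNorm_spec M0 w
        _ = γ * eNorm w := by rw [hγ]
  have e1 : δ * sinAngle u μt * (eNorm u / eNorm μ)
      = (δ * (sinAngle u μt * eNorm u)) / eNorm μ := by ring
  have e2 : γ * (eNorm w / eNorm μ) = (γ * eNorm w) / eNorm μ := by ring
  rw [e1, e2, hsin]
  exact (div_le_div_iff_of_pos_right hcμ).mpr hmain
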